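/- Let A be an associative unital ℂ-algebra, q ∈ ℂ nonzero with q² ≠ 1, z ∈ ℂ nonzero, and u, v ∈ A invertible with u·v = q²·v·u. Define K = z·u⁻¹, E = (q − q⁻¹)⁻¹·v⁻¹·(1 − u⁻¹), F = q(q − q⁻¹)⁻¹·v·(z·1 − z⁻¹·u). Then K is invertible with K⁻¹ = z⁻¹·u, and the quantum group relations hold: K·E = q²·E·K, K·F = q⁻²·F·K, and E·F − F·E = (q − q⁻¹)⁻¹·(K − K⁻¹). (Free field realization of U_q(sl(2)) in the quantum torus.) -/

import Mathlib

set_option maxHeartbeats 1000000 in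


/-- Free field realization of `U_q(sl(2))` in the quantum torus:
the elements `K, E, F` built from a Weyl pair `u, v` with `u·v = q²·v·u`
satisfy the quantum group relations, and `K` is invertible with inverse `z⁻¹·u`. -/
theorem free_field_realization_uqsl2
    (A : Type*) [Ring A] [Algebra ℂ A]
    (q z : ℂ) (hq : q ≠ 0) (hq2 : q ^ 2 ≠ 1) (hz : z ≠ 0)
    (u v : Aˣ) (huv : (u : A) * (v : A) = q ^ 2 • ((v : A) * (u : A))) :
    let K : A := z • (↑u⁻¹ : A)
    let K' : A := z⁻¹ • (u : A)
    let E : A := (q - q⁻¹)⁻¹ • ((↑v⁻¹ : A) * (1 - (↑u⁻¹ : A)))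
    let F : A := (q * (q - q⁻¹)⁻¹) • ((v : A) * (z • (1 : A) - z⁻¹ • (u : A)))
    (K * K' = 1 ∧ K' * K = 1) ∧
      K * E = q ^ 2 • (E * K) ∧
      K * F = (q⁻¹) ^ 2 • (F * K) ∧
      E * F - F * E = (q - q⁻¹)⁻¹ • (K - K') := by
  intro K K' E F
  have hq2' : (q : ℂ) ^ 2 ≠ 0 := pow_ne_zero 2 hq
  have hq21 : q ^ 2 - 1 ≠ 0 := sub_ne_zero.mpr hq2
  have hqq : q - q⁻¹ ≠ 0 := by
    intro h0
    apply hq2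
    have h : (q - q⁻¹) * q = q ^ 2 - 1 := by field_simp
    rw [h0, zero_mul] at h
    exact sub_eq_zero.mp h.symm
  have hdq : (q - q⁻¹)⁻¹ * (q - q⁻¹) = 1 := inv_mul_cancel₀ hqq
  have hw : q * q⁻¹ = 1 := mul_inv_cancel₀ hq
  -- commutation relations
  have h1 : (↑u⁻¹ : A) * (v : A) = (q ^ 2)⁻¹ • ((v : A) * ↑u⁻¹) := by
    have h : (v : A) * ↑u⁻¹ = q ^ 2 • ((↑u⁻¹ : A) * v) := by
      have := congrArg (fun x => (↑u⁻¹ : A) * x * ↑u⁻¹) huv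
      simpa [mul_assoc, Units.inv_mul_cancel_left, Units.mul_inv, mul_smul_comm,
        smul_mul_assoc, mul_one] using this
    rw [h, smul_smul, inv_mul_cancel₀ hq2', one_smul]
  have h2 : (u : A) * ↑v⁻¹ = (q ^ 2)⁻¹ • ((↑v⁻¹ : A) * u) := by
    have h : (↑v⁻¹ : A) * u = q ^ 2 • ((u : A) * ↑v⁻¹) := by
      have := congrArg (fun x => (↑v⁻¹ : A) * x * ↑v⁻¹) huv
      simpa [mul_assoc, Units.inv_mul_cancel_left, Units.mul_inv, mul_smul_comm,
        smul_mul_assoc, mul_one] using this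
    rw [h, smul_smul, inv_mul_cancel₀ hq2', one_smul]
  have h3 : (↑u⁻¹ : A) * ↑v⁻¹ = q ^ 2 • ((↑v⁻¹ : A) * ↑u⁻¹) := by
    have h := congrArg (fun x => (↑u⁻¹ : A) * x * ↑u⁻¹) h2
    simp only [mul_assoc, Units.inv_mul_cancel_left, Units.mul_inv, mul_one,
      mul_smul_comm, smul_mul_assoc] at h
    rw [h, smul_smul, mul_inv_cancel₀ hq2', one_smul]
  have h1' : ∀ w : A, (↑u⁻¹ : A) * ((v : A) * w) = (q ^ 2)⁻¹ • ((v : A) * (↑u⁻¹ * w)) := by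
    intro w; rw [← mul_assoc, h1, smul_mul_assoc, mul_assoc]
  have h2' : ∀ w : A, (u : A) * ((↑v⁻¹ : A) * w) = (q ^ 2)⁻¹ • ((↑v⁻¹ : A) * ((u : A) * w)) := by
    intro w; rw [← mul_assoc, h2, smul_mul_assoc, mul_assoc]
  have h3' : ∀ w : A, (↑u⁻¹ : A) * ((↑v⁻¹ : A) * w) = q ^ 2 • ((↑v⁻¹ : A) * (↑u⁻¹ * w)) := by
    intro w; rw [← mul_assoc, h3, smul_mul_assoc, mul_assoc]
  refine ⟨⟨?_, ?_⟩, ?_, ?_, ?_⟩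
  · show (z • (↑u⁻¹ : A)) * (z⁻¹ • (u : A)) = 1
    rw [smul_mul_assoc, mul_smul_comm, smul_smul, Units.inv_mul, mul_inv_cancel₀ hz, one_smul]
  · show (z⁻¹ • (u : A)) * (z • (↑u⁻¹ : A)) = 1
    rw [smul_mul_assoc, mul_smul_comm, smul_smul, Units.mul_inv, inv_mul_cancel₀ hz, one_smul]
  · show (z • (↑u⁻¹ : A)) * ((q - q⁻¹)⁻¹ • ((↑v⁻¹ : A) * (1 - ↑u⁻¹)))
      = q ^ 2 • (((q - q⁻¹)⁻¹ • ((↑v⁻¹ : A) * (1 - ↑u⁻¹))) * (z • ↑u⁻¹))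
    simp only [mul_sub, sub_mul, mul_one, one_mul, smul_sub, smul_smul, mul_smul_comm,
      smul_mul_assoc, mul_assoc, h3, h3']
    match_scalars <;> ring
  · show (z • (↑u⁻¹ : A)) * ((q * (q - q⁻¹)⁻¹) • ((v : A) * (z • (1:A) - z⁻¹ • (u : A))))
      = (q⁻¹) ^ 2 • (((q * (q - q⁻¹)⁻¹) • ((v : A) * (z • (1:A) - z⁻¹ • (u : A)))) * (z • ↑u⁻¹))
    simp only [mul_sub, sub_mul, mul_one, one_mul, smul_sub, smul_smul, mul_smul_comm,
      smul_mul_assoc, mul_assoc, h1, h1', Units.mul_inv_cancel_left, Units.inv_mul_cancel_left,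
      Units.mul_inv, Units.inv_mul]
    match_scalars <;> ring
  · show ((q - q⁻¹)⁻¹ • ((↑v⁻¹ : A) * (1 - ↑u⁻¹))) * ((q * (q - q⁻¹)⁻¹) • ((v : A) * (z • (1:A) - z⁻¹ • (u : A))))
      - ((q * (q - q⁻¹)⁻¹) • ((v : A) * (z • (1:A) - z⁻¹ • (u : A)))) * ((q - q⁻¹)⁻¹ • ((↑v⁻¹ : A) * (1 - ↑u⁻¹)))
      = (q - q⁻¹)⁻¹ • (z • (↑u⁻¹ : A) - z⁻¹ • (u : A))
    simp only [mul_sub, sub_mul, mul_one, one_mul, smul_sub, smul_smul, mul_smul_comm,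
      smul_mul_assoc, mul_assoc, h1, h2, h3, h1', h2', h3', Units.mul_inv_cancel_left,
      Units.inv_mul_cancel_left, Units.mul_inv, Units.inv_mul]
    match_scalars
    · ring
    · linear_combination (((q - q⁻¹)⁻¹) * z) * hdq - (((q - q⁻¹)⁻¹) ^ 2 * z * q⁻¹) * hw
    · linear_combination (-((q - q⁻¹)⁻¹) * z⁻¹) * hdq + (((q - q⁻¹)⁻¹) ^ 2 * z⁻¹ * q⁻¹) * hw
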